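/- Consider sequences (z_k) in ℝⁿ, time-varying nonempty closed convex sets Y_k ⊆ ℝⁿ, maps Φ_k : ℝⁿ → ℝⁿ each strongly monotone with constant η > 0 and Lipschitz with constant L, and points z*_k ∈ Y_k which are fixed points: z*_k = proj_{Y_k}(z*_k − αΦ_k(z*_k)). Suppose the iteration z_{k+1} = proj_{Y_k}(z_k − α(Φ_k(z_k) + e_k)) is run with perturbations ‖e_k‖ ≤ E and the optimizers drift slowly: ‖z*_{k+1} − z*_k‖ ≤ σ for all k. If 0 < α < 2η/L², then with ρ := √(1 − 2αη + α²L²) < 1, one has ‖z_k − z*_k‖ ≤ ρ^k‖z_0 − z*_0‖ + (1 − ρ^k)/(1 − ρ)·(αE + σ) for all k ≥ 0. -/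

import Mathlib

/-- `p` is a metric projection (nearest point) of `x` onto `Y`. -/
def IsProjOn {E : Type*} [NormedAddCommGroup E] (Y : Set E) (x p : E) : Prop :=
  p ∈ Y ∧ ∀ y ∈ Y, ‖x - p‖ ≤ ‖x - y‖

section Aux

variable {F : Type*} [NormedAddCommGroup F] [InnerProductSpace ℝ F]

lemma isProjOn_var_ineq {K : Set F} (hK : Convex ℝ K) {x p : F} (h : IsProjOn K x p) :
    ∀ w ∈ K, (inner ℝ (x - p) (w - p) : ℝ) ≤ 0 := by
  obtain ⟨hp, hmin⟩ := h
  haveI : Nonempty K := ⟨⟨p, hp⟩⟩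
  rw [← norm_eq_iInf_iff_real_inner_le_zero hK hp]
  refine le_antisymm (le_ciInf fun w => hmin w w.2) ?_
  exact ciInf_le ⟨0, fun _ ⟨_, h⟩ => h ▸ norm_nonneg _⟩ (⟨p, hp⟩ : K)

lemma isProjOn_nonexpansive {K : Set F} (hK : Convex ℝ K) {x y p q : F}
    (hx : IsProjOn K x p) (hy : IsProjOn K y q) : ‖p - q‖ ≤ ‖x - y‖ := by
  have h1 : (inner ℝ (x - p) (q - p) : ℝ) ≤ 0 := isProjOn_var_ineq hK hx q hy.1
  have h2 : (inner ℝ (y - q) (p - q) : ℝ) ≤ 0 := isProjOn_var_ineq hK hy p hx.1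
  have key : ‖p - q‖ ^ 2 ≤ (inner ℝ (x - y) (p - q) : ℝ) := by
    have e1 : (inner ℝ (x - y) (p - q) : ℝ) - ‖p - q‖ ^ 2
        = -(inner ℝ (x - p) (q - p) : ℝ) - (inner ℝ (y - q) (p - q) : ℝ) := by
      rw [← real_inner_self_eq_norm_sq]
      simp only [inner_sub_left, inner_sub_right]
      ring
    nlinarith [e1]
  have h3 : (inner ℝ (x - y) (p - q) : ℝ) ≤ ‖x - y‖ * ‖p - q‖ := real_inner_le_norm _ _
  rcases eq_or_lt_of_le (norm_nonneg (p - q)) with h0 | h0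
  · rw [← h0]; exact norm_nonneg _
  · have := key.trans h3
    rw [sq] at this
    exact le_of_mul_le_mul_right (by linarith) h0

end Aux

theorem stmt_4 (n : ℕ) (Y : ℕ → Set (EuclideanSpace ℝ (Fin n)))
    (hYne : ∀ k, (Y k).Nonempty) (hYcl : ∀ k, IsClosed (Y k)) (hYcv : ∀ k, Convex ℝ (Y k))
    (Φ : ℕ → EuclideanSpace ℝ (Fin n) → EuclideanSpace ℝ (Fin n))
    (η L α E σ : ℝ) (hη : 0 < η)
    (hmono : ∀ k x y, η * ‖x - y‖ ^ 2 ≤ (inner ℝ (Φ k x - Φ k y) (x - y) : ℝ))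
    (hlip : ∀ k x y, ‖Φ k x - Φ k y‖ ≤ L * ‖x - y‖)
    (proj : ℕ → EuclideanSpace ℝ (Fin n) → EuclideanSpace ℝ (Fin n))
    (hproj : ∀ k x, IsProjOn (Y k) x (proj k x))
    (zstar : ℕ → EuclideanSpace ℝ (Fin n)) (hzY : ∀ k, zstar k ∈ Y k)
    (hfix : ∀ k, proj k (zstar k - α • Φ k (zstar k)) = zstar k)
    (z e : ℕ → EuclideanSpace ℝ (Fin n))
    (hiter : ∀ k, z (k + 1) = proj k (z k - α • (Φ k (z k) + e k)))
    (herr : ∀ k, ‖e k‖ ≤ E)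
    (hdrift : ∀ k, ‖zstar (k + 1) - zstar k‖ ≤ σ)
    (hα0 : 0 < α) (hα : α < 2 * η / L ^ 2) :
    Real.sqrt (1 - 2 * α * η + α ^ 2 * L ^ 2) < 1 ∧
    ∀ k, ‖z k - zstar k‖ ≤
      Real.sqrt (1 - 2 * α * η + α ^ 2 * L ^ 2) ^ k * ‖z 0 - zstar 0‖ +
      (1 - Real.sqrt (1 - 2 * α * η + α ^ 2 * L ^ 2) ^ k) /
        (1 - Real.sqrt (1 - 2 * α * η + α ^ 2 * L ^ 2)) * (α * E + σ) := by
  set c : ℝ := 1 - 2 * α * η + α ^ 2 * L ^ 2 with hc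
  set ρ : ℝ := Real.sqrt c with hρ
  have hL2 : 0 < L ^ 2 := by
    rcases eq_or_ne L 0 with h | h
    · exfalso; rw [h] at hα; simp at hα; linarith
    · positivity
  have hc1 : c < 1 := by
    have : α * L ^ 2 < 2 * η := by
      rw [div_eq_mul_inv] at hα
      calc α * L ^ 2 < (2 * η / L ^ 2) * L ^ 2 := by
            exact mul_lt_mul_of_pos_right (by rwa [div_eq_mul_inv]) hL2
        _ = 2 * η := by rw [div_mul_cancel₀ _ hL2.ne']
    nlinarith
  have hρ0 : 0 ≤ ρ := Real.sqrt_nonneg _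
  have hρ1 : ρ < 1 := by
    rcases lt_or_ge c 0 with h | h
    · rw [hρ, Real.sqrt_eq_zero_of_nonpos h.le]; norm_num
    · rw [hρ]; rw [show (1:ℝ) = Real.sqrt 1 by simp]
      exact Real.sqrt_lt_sqrt h hc1
  have hE : 0 ≤ E := (norm_nonneg _).trans (herr 0)
  have hσ : 0 ≤ σ := (norm_nonneg _).trans (hdrift 0)
  -- contraction lemma
  have hcontr : ∀ k x, ‖(x - zstar k) - α • (Φ k x - Φ k (zstar k))‖ ≤ ρ * ‖x - zstar k‖ := by
    intro k x
    set w := x - zstar k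
    set Δ := Φ k x - Φ k (zstar k)
    have hsq : ‖w - α • Δ‖ ^ 2 ≤ c * ‖w‖ ^ 2 := by
      have e1 : ‖w - α • Δ‖ ^ 2 = ‖w‖ ^ 2 - 2 * α * (inner ℝ Δ w : ℝ) + α ^ 2 * ‖Δ‖ ^ 2 := by
        rw [← real_inner_self_eq_norm_sq, ← real_inner_self_eq_norm_sq,
          ← real_inner_self_eq_norm_sq]
        simp only [inner_sub_left, inner_sub_right, real_inner_smul_left, real_inner_smul_right]
        rw [real_inner_comm Δ w]
        ring
      have hm : η * ‖w‖ ^ 2 ≤ (inner ℝ Δ w : ℝ) := hmono k x (zstar k)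
      have hl : ‖Δ‖ ^ 2 ≤ L ^ 2 * ‖w‖ ^ 2 := by
        have := hlip k x (zstar k)
        nlinarith [norm_nonneg Δ, norm_nonneg w]
      rw [e1, hc]
      nlinarith [sq_nonneg α]
    calc ‖w - α • Δ‖ = Real.sqrt (‖w - α • Δ‖ ^ 2) := by
          rw [Real.sqrt_sq (norm_nonneg _)]
      _ ≤ Real.sqrt (c * ‖w‖ ^ 2) := Real.sqrt_le_sqrt hsq
      _ = ρ * ‖w‖ := by
          rw [Real.sqrt_mul' _ (sq_nonneg _), Real.sqrt_sq (norm_nonneg _)]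
  -- one step inequality
  have hstep : ∀ k, ‖z (k + 1) - zstar (k + 1)‖ ≤ ρ * ‖z k - zstar k‖ + (α * E + σ) := by
    intro k
    have h1 : ‖z (k + 1) - zstar k‖ ≤ ρ * ‖z k - zstar k‖ + α * E := by
      have hne : ‖z (k + 1) - zstar k‖ ≤
          ‖(z k - α • (Φ k (z k) + e k)) - (zstar k - α • Φ k (zstar k))‖ := by
        have h0 := isProjOn_nonexpansive (hYcv k)
          (hproj k (z k - α • (Φ k (z k) + e k))) (hproj k (zstar k - α • Φ k (zstar k)))
        rw [hfix k] at h0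
        rw [hiter k]
        exact h0
      have heq : (z k - α • (Φ k (z k) + e k)) - (zstar k - α • Φ k (zstar k))
          = ((z k - zstar k) - α • (Φ k (z k) - Φ k (zstar k))) + (-(α • e k)) := by
        simp only [smul_add, smul_sub]; abel
      calc ‖z (k + 1) - zstar k‖
          ≤ ‖((z k - zstar k) - α • (Φ k (z k) - Φ k (zstar k))) + (-(α • e k))‖ := by
            rw [← heq]; exact hne
        _ ≤ ‖(z k - zstar k) - α • (Φ k (z k) - Φ k (zstar k))‖ + ‖α • e k‖ := by
            refine (norm_add_le _ _).trans ?_; rw [norm_neg]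
        _ ≤ ρ * ‖z k - zstar k‖ + α * E := by
            refine add_le_add (hcontr k (z k)) ?_
            rw [norm_smul, Real.norm_eq_abs, abs_of_pos hα0]
            exact mul_le_mul_of_nonneg_left (herr k) hα0.le
    calc ‖z (k + 1) - zstar (k + 1)‖
        ≤ ‖z (k + 1) - zstar k‖ + ‖zstar k - zstar (k + 1)‖ := norm_sub_le_norm_sub_add_norm_sub _ _ _
      _ ≤ (ρ * ‖z k - zstar k‖ + α * E) + σ := by
          refine add_le_add h1 ?_; rw [norm_sub_rev]; exact hdrift k
      _ = ρ * ‖z k - zstar k‖ + (α * E + σ) := by ring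
  refine ⟨hρ1, ?_⟩
  intro k
  induction k with
  | zero => simp
  | succ k ih =>
      have hρne : 1 - ρ ≠ 0 := by linarith
      calc ‖z (k + 1) - zstar (k + 1)‖ ≤ ρ * ‖z k - zstar k‖ + (α * E + σ) := hstep k
        _ ≤ ρ * (ρ ^ k * ‖z 0 - zstar 0‖ + (1 - ρ ^ k) / (1 - ρ) * (α * E + σ)) + (α * E + σ) :=
            by refine add_le_add_left (mul_le_mul_of_nonneg_left ih hρ0) _
        _ = ρ ^ (k + 1) * ‖z 0 - zstar 0‖ + (1 - ρ ^ (k + 1)) / (1 - ρ) * (α * E + σ) := by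
            field_simp
            ring
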